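/- For all w, r ∈ ℕ: μ(w,r,2) = C(w+2, 2) if r ≥ 2w; μ(w,r,2) = C(w+1, 2) + (r − w + 1) if w − 1 ≤ r < 2w; and μ(w,r,2) = C(r+2, 2) if r < w − 1; where C(·,·) denotes the binomial coefficient. -/
import Mathlib


open scoped BigOperators Classical
open Filter

namespace TandemDup

variable {S : Type} [Fintype S] [DecidableEq S] [Ring S]

/-- A single tandem duplication with window length `k`:
`a = xyz` with `|y| = k` is mapped to `b = xyyz`. -/
def Dup (k : ℕ) (a b : List S) : Prop :=
  ∃ x y z : List S, y.length = k ∧ a = x ++ y ++ z ∧ b = x ++ y ++ y ++ z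

/-- `DescN k t x y` : `y` is a `t`-descendant of `x`. -/
def DescN (k : ℕ) : ℕ → List S → List S → Prop
  | 0, a, b => a = b
  | t + 1, a, b => ∃ c, DescN k t a c ∧ Dup k c b

/-- The set `D^t(x)` of `t`-descendants of `x`. -/
def DSet (k t : ℕ) (x : List S) : Set (List S) := {y | DescN k t x y}

/-- The descendant cone `D^*(x)`. -/
def DStar (k : ℕ) (x : List S) : Set (List S) := ⋃ t : ℕ, DSet k t x

/-- A string of length at least `k` is irreducible if it has no ancestor other than itself. -/
def Irred (k : ℕ) (x : List S) : Prop :=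
  k ≤ x.length ∧ ∀ z : List S, x ∈ DStar k z → z = x

/-- The duplication root `rt(y)`: an irreducible ancestor of `y` (unique, by the theory). -/
noncomputable def rt (k : ℕ) (y : List S) : List S :=
  if h : ∃ x : List S, Irred k x ∧ y ∈ DStar k x then h.choose else y

/-- The (non-anchor part of the) discrete derivative `φ̄(x)`. -/
def phiBar (k : ℕ) (x : List S) : List S :=
  (List.range (x.length - k)).map (fun i => x.getD (i + k) 0 - x.getD i 0)

/-- Hamming weight of a string: the number of its nonzero letters. -/
def wtH (l : List S) : ℕ := (l.filter (fun a => decide (a ≠ 0))).length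

/-- `w(x) := wt_H(φ̄(x))`. -/
def wgt (k : ℕ) (x : List S) : ℕ := wtH (phiBar k x)

/-- `r(x) := (|x| - |rt(x)|)/k`, the number of duplications taking `rt(x)` to `x`. -/
noncomputable def rr (k : ℕ) (x : List S) : ℕ := (x.length - (rt k x).length) / k

/-- The typicality condition on the weight `w`. -/
def wTypical (q k n w : ℕ) : Prop :=
  |(w : ℝ) - (((q : ℝ) - 1) / (q : ℝ)) * ((n : ℝ) - (k : ℝ))| < (n : ℝ) ^ ((3 : ℝ) / 4)

/-- The typicality condition on the number of duplications `r`. -/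
def rTypical (q k n r : ℕ) : Prop :=
  |(r : ℝ) - (((q : ℝ) - 1) / ((q : ℝ) * ((q : ℝ) ^ k - 1))) * ((n : ℝ) - (k : ℝ))|
    < 2 * (n : ℝ) ^ ((3 : ℝ) / 4)

/-- The typical set `typ^n`. -/
def typ (k n : ℕ) : Set (List S) :=
  {x | x.length = n ∧ wTypical (Fintype.card S) k n (wgt k x) ∧
    rTypical (Fintype.card S) k n (rr k x)}

/-- The uncertainty `N_t(m, C)`: the maximal size of `⋂ᵢ D^t(xᵢ)` over pairwise
distinct `x₁, …, x_m ∈ C`. -/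
noncomputable def Nt (k t m : ℕ) (C : Set (List S)) : ℕ :=
  sSup { N : ℕ | ∃ f : Fin m → List S, Function.Injective f ∧ (∀ i, f i ∈ C) ∧
    N = (⋂ i, DSet k t (f i)).ncard }

/-- `S̄_t(u₁, …, u_m) = ⋂ᵢ {v : v ≥ uᵢ, ‖v - uᵢ‖₁ = t}`. -/
def Sbar (w t : ℕ) {m : ℕ} (u : Fin m → (Fin (w + 1) → ℕ)) : Set (Fin (w + 1) → ℕ) :=
  ⋂ i, {v | u i ≤ v ∧ ∑ j, (v j - u i j) = t}

/-- `N̄_t(m, w, r)`. -/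
noncomputable def Nbar (t m w r : ℕ) : ℕ :=
  sSup { N : ℕ | ∃ u : Fin m → (Fin (w + 1) → ℕ), Function.Injective u ∧
    (∀ i, ∑ j, u i j = r) ∧ N = (Sbar w t u).ncard }

/-- The minimum supremum height `σ(m, w, r)`. -/
noncomputable def sigma (m w r : ℕ) : ℕ :=
  sInf { s : ℕ | ∃ u : Fin m → (Fin (w + 1) → ℕ), Function.Injective u ∧
    (∀ i, ∑ j, u i j = r) ∧ (∑ j, Finset.univ.sup fun i => u i j) = r + s }

/-- The lower-bounds set `A_r(u)`. -/
def lbs (w r : ℕ) (u : Fin (w + 1) → ℕ) : Set (Fin (w + 1) → ℕ) :=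
  {v | (∑ j, v j) = r ∧ v ≤ u}

/-- The maximal lower-bounds-set size `μ(w, r, s)`. -/
noncomputable def mu (w r s : ℕ) : ℕ :=
  sSup { N : ℕ | ∃ u : Fin (w + 1) → ℕ, (∑ j, u j) = r + s ∧ N = (lbs w r u).ncard }

/-- Twice the distance `d₁`, i.e. the `ℓ₁`-distance `‖u - v‖₁` on `ℕ^{w+1}`. -/
def l1dist {w : ℕ} (u v : Fin (w + 1) → ℕ) : ℕ :=
  ∑ j, ((u j - v j) + (v j - u j))

/-- `N̄_t(m, w, r, d)`. -/
noncomputable def NbarD (t m w r d : ℕ) : ℕ :=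
  sSup { N : ℕ | ∃ u : Fin m → (Fin (w + 1) → ℕ),
    (∀ i, ∑ j, u i j = r) ∧ (∀ i j, i ≠ j → 2 * d ≤ l1dist (u i) (u j)) ∧
    N = (Sbar w t u).ncard }

/-- `σ(m, w, r, d)`. -/
noncomputable def sigmaD (m w r d : ℕ) : ℕ :=
  sInf { s : ℕ | ∃ u : Fin m → (Fin (w + 1) → ℕ),
    (∀ i, ∑ j, u i j = r) ∧ (∀ i j, i ≠ j → 2 * d ≤ l1dist (u i) (u j)) ∧
    (∑ j, Finset.univ.sup fun i => u i j) = r + s }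

/-- `μ(w, r, s, d)`. -/
noncomputable def muD (w r s d : ℕ) : ℕ :=
  sSup { N : ℕ | ∃ u : Fin (w + 1) → ℕ, (∑ j, u j) = r + s ∧
    ∃ C : Set (Fin (w + 1) → ℕ), C ⊆ lbs w r u ∧
      (∀ v₁ ∈ C, ∀ v₂ ∈ C, v₁ ≠ v₂ → 2 * d ≤ l1dist v₁ v₂) ∧ N = C.ncard }

/-- The duplication distance `d(y₁, y₂)`. -/
noncomputable def distDup (k : ℕ) (y₁ y₂ : List S) : ℕ :=
  sInf {t : ℕ | (DSet k t y₁ ∩ DSet k t y₂).Nonempty}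

/-- `N^typ_t(m, n, d)`. -/
noncomputable def NtypD (k t m n d : ℕ) : ℕ :=
  sSup { N : ℕ | ∃ f : Fin m → List S, (∀ i, f i ∈ typ k n) ∧
    (∀ i j, i ≠ j → d ≤ distDup k (f i) (f j)) ∧
    N = (⋂ i, DSet k t (f i)).ncard }

/-- `A(ν, D, ω)`: the maximum size of a binary code of length `ν`, constant Hamming
weight `ω`, and minimum Hamming distance `D`. -/
noncomputable def Abin (ν D ω : ℕ) : ℕ :=
  sSup { N : ℕ | ∃ C : Set (Fin ν → ZMod 2), (∀ x ∈ C, hammingNorm x = ω) ∧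
    (∀ x ∈ C, ∀ y ∈ C, x ≠ y → D ≤ hammingDist x y) ∧ N = C.ncard }

/-- Zero-run-length representation: `ψ_x(y)` as a list, mapping `φ̄(y)` written as
`0^{u(1)} a₁ 0^{u(2)} … a_w 0^{u(w+1)}` (with the `aᵢ` nonzero) to
`(⌊u(1)/k⌋, …, ⌊u(w+1)/k⌋)`. -/
def psiList (k : ℕ) (y : List S) : List ℕ :=
  ((phiBar k y).splitOnP (fun a => decide (a ≠ 0))).map (fun run => run.length / k)

/-- `ψ_x(y)` as a vector in `ℕ^{w+1}`. -/
def psiVec (k w : ℕ) (y : List S) : Fin (w + 1) → ℕ := fun i => (psiList k y).getD i 0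

/-- `s = ⌈log_n m⌉`. -/
noncomputable def sExp (n m : ℕ) : ℕ := ⌈Real.logb n m⌉₊

/-- The indicator `δ(m, n)` of Theorem 17. -/
noncomputable def deltaTyp (q k n m : ℕ) : ℕ :=
  if ∀ r : ℕ, rTypical q k n r → Nat.choose (r + sExp n m) r < m then 1 else 0

/-- `s = ⌈log_n m⌉ + d - 1`. -/
noncomputable def sExpD (n m d : ℕ) : ℕ := sExp n m + (d - 1)

/-- The indicator `δ(m, n, d)` of Theorem 29. -/
noncomputable def deltaEcc (q k d n m : ℕ) : ℕ :=
  if ∀ r : ℕ, rTypical q k n r → Abin (r + sExpD n m d) (2 * d) (sExpD n m d) < m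
  then 1 else 0



lemma sum_indicator_lt (n k : ℕ) (h : k ≤ n) :
    (∑ j : Fin n, if (j : ℕ) < k then 1 else 0) = k := by
  rw [Fin.sum_univ_eq_sum_range (fun i => if i < k then (1:ℕ) else 0)]
  have h1 : ∀ i ∈ Finset.range n, (if i < k then (1:ℕ) else 0)
      = if i ∈ Finset.range k then 1 else 0 := by
    intro i _; simp [Finset.mem_range]
  rw [Finset.sum_congr rfl h1, Finset.sum_ite_mem]
  have h2 : Finset.range n ∩ Finset.range k = Finset.range k := by
    ext i; simp only [Finset.mem_inter, Finset.mem_range]; omega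
  rw [h2]; simp

lemma card_filter_lt (n k : ℕ) (h : k ≤ n) :
    (Finset.univ.filter fun j : Fin n => (j : ℕ) < k).card = k := by
  rw [Finset.card_filter]; exact sum_indicator_lt n k h

lemma choose_step (a : ℕ) : (a+1).choose 2 = a + a.choose 2 := by
  rw [Nat.choose_succ_succ, Nat.choose_one_right]

lemma lbs_ncard (w r : ℕ) (u : Fin (w+1) → ℕ) (hu : (∑ j, u j) = r + 2) :
    (lbs w r u).ncard =
      (Finset.univ.filter fun j => 2 ≤ u j).card +
      ((Finset.univ.filter fun j => 1 ≤ u j).card).choose 2 := by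
  classical
  have himg : lbs w 2 u = (fun v => u - v) '' lbs w r u := by
    ext e
    simp only [lbs, Set.mem_setOf_eq, Set.mem_image]
    constructor
    · rintro ⟨he2, heu⟩
      refine ⟨u - e, ⟨?_, ?_⟩, ?_⟩
      · have h2 : (∑ j, e j) + ∑ j, (u - e) j = ∑ j, u j := by
          rw [← Finset.sum_add_distrib]
          refine Finset.sum_congr rfl (fun j _ => ?_)
          have hj : e j ≤ u j := heu j
          simp only [Pi.sub_apply]; omega
        omega
      · intro j; simp only [Pi.sub_apply]; exact Nat.sub_le _ _
      · funext j
        have hj : e j ≤ u j := heu j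
        simp only [Pi.sub_apply]; omega
    · rintro ⟨v, ⟨hvr, hvu⟩, rfl⟩
      constructor
      · have h2 : (∑ j, v j) + ∑ j, (u - v) j = ∑ j, u j := by
          rw [← Finset.sum_add_distrib]
          refine Finset.sum_congr rfl (fun j _ => ?_)
          have hj : v j ≤ u j := hvu j
          simp only [Pi.sub_apply]; omega
        omega
      · intro j; simp only [Pi.sub_apply]; exact Nat.sub_le _ _
  have hinj : Set.InjOn (fun v => u - v) (lbs w r u) := by
    intro v1 h1 v2 h2 he
    funext j
    have e1 : v1 j ≤ u j := h1.2 j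
    have e2 : v2 j ≤ u j := h2.2 j
    have h3 := congrFun he j
    simp only [Pi.sub_apply] at h3
    omega
  have hcard : (lbs w r u).ncard = (lbs w 2 u).ncard := by
    rw [himg, Set.ncard_image_of_injOn hinj]
  rw [hcard]
  set S2 := Finset.univ.filter fun j : Fin (w+1) => 2 ≤ u j with hS2
  set S1 := Finset.univ.filter fun j : Fin (w+1) => 1 ≤ u j with hS1
  set F1 : Finset (Fin (w+1) → ℕ) :=
    S2.image (fun j => fun i => if i = j then 2 else 0) with hF1
  set F2 : Finset (Fin (w+1) → ℕ) :=
    (S1.powersetCard 2).image (fun P => fun i => if i ∈ P then 1 else 0) with hF2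
  have hset : lbs w 2 u = ↑(F1 ∪ F2) := by
    ext e
    simp only [lbs, Set.mem_setOf_eq, Finset.coe_union, Set.mem_union, Finset.mem_coe]
    constructor
    · rintro ⟨hs, hle⟩
      by_cases h2 : ∃ j, e j = 2
      · left
        obtain ⟨j, hj⟩ := h2
        refine Finset.mem_image.2 ⟨j, ?_, ?_⟩
        · simp only [hS2, Finset.mem_filter, Finset.mem_univ, true_and]
          have hj2 : e j ≤ u j := hle j
          omega
        · have hsum : e j + ∑ i ∈ Finset.univ.erase j, e i = 2 := by
            rw [Finset.add_sum_erase _ e (Finset.mem_univ j)]; exact hs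
          have hz : ∑ i ∈ Finset.univ.erase j, e i = 0 := by omega
          funext i
          by_cases hij : i = j
          · simp [hij, hj]
          · rw [if_neg hij]
            exact ((Finset.sum_eq_zero_iff).1 hz i (Finset.mem_erase.2 ⟨hij, Finset.mem_univ i⟩)).symm
      · right
        have hle1 : ∀ i, e i ≤ 1 := by
          intro i
          have hle2 : e i ≤ 2 :=
            hs ▸ Finset.single_le_sum (f := e) (fun i _ => Nat.zero_le _) (Finset.mem_univ i)
          have : e i ≠ 2 := fun h => h2 ⟨i, h⟩
          omega
        refine Finset.mem_image.2 ⟨Finset.univ.filter (fun i => e i = 1), ?_, ?_⟩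
        · rw [Finset.mem_powersetCard]
          constructor
          · intro i hi
            simp only [Finset.mem_filter, Finset.mem_univ, true_and] at hi
            simp only [hS1, Finset.mem_filter, Finset.mem_univ, true_and]
            have hi2 : e i ≤ u i := hle i
            omega
          · rw [Finset.card_filter, ← hs]
            exact Finset.sum_congr rfl (fun i _ => by have := hle1 i; split_ifs <;> omega)
        · funext i
          by_cases h : e i = 1
          · simp [h]
          · simp only [Finset.mem_filter, Finset.mem_univ, true_and, h, if_false]
            have := hle1 i; omega
    · rintro (he | he) <;> obtain ⟨x, hx, rfl⟩ := Finset.mem_image.1 he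
      · simp only [hS2, Finset.mem_filter, Finset.mem_univ, true_and] at hx
        constructor
        · simp [Finset.sum_ite_eq']
        · intro i
          show (if i = x then 2 else 0) ≤ u i
          by_cases h : i = x
          · subst h; rw [if_pos rfl]; exact hx
          · rw [if_neg h]; exact Nat.zero_le _
      · rw [Finset.mem_powersetCard] at hx
        constructor
        · rw [Finset.sum_ite_mem, Finset.univ_inter, Finset.sum_const, hx.2]; simp
        · intro i
          show (if i ∈ x then 1 else 0) ≤ u i
          by_cases h : i ∈ x
          · rw [if_pos h]
            have hmem := hx.1 h
            simp only [hS1, Finset.mem_filter, Finset.mem_univ, true_and] at hmem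
            exact hmem
          · rw [if_neg h]; exact Nat.zero_le _
  rw [hset, Set.ncard_coe_finset]
  have hdisj : Disjoint F1 F2 := by
    rw [Finset.disjoint_left]
    rintro e he1 he2
    obtain ⟨j, hj, rfl⟩ := Finset.mem_image.1 he1
    obtain ⟨P, hP, hPe⟩ := Finset.mem_image.1 he2
    have := congrFun hPe j
    simp only [if_pos rfl] at this
    split_ifs at this <;> omega
  rw [Finset.card_union_of_disjoint hdisj]
  congr 1
  · rw [Finset.card_image_of_injective]
    intro j1 j2 h
    have := congrFun h j1
    by_cases h12 : j1 = j2
    · exact h12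
    · simp [h12] at this
  · rw [Finset.card_image_of_injective, Finset.card_powersetCard]
    intro P1 P2 h
    ext i
    have := congrFun h i
    constructor <;> intro hi
    · by_contra hi2; simp [hi, hi2] at this
    · by_contra hi2; simp [hi, hi2] at this

lemma card_facts (w : ℕ) (u : Fin (w+1) → ℕ) :
    (Finset.univ.filter fun j => 2 ≤ u j).card ≤ (Finset.univ.filter fun j => 1 ≤ u j).card ∧
    (Finset.univ.filter fun j => 1 ≤ u j).card ≤ w + 1 ∧
    (Finset.univ.filter fun j => 1 ≤ u j).card + (Finset.univ.filter fun j => 2 ≤ u j).card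
      ≤ ∑ j, u j := by
  refine ⟨?_, ?_, ?_⟩
  · refine Finset.card_le_card ?_
    intro j hj
    simp only [Finset.mem_filter, Finset.mem_univ, true_and] at hj ⊢
    omega
  · exact le_trans (Finset.card_filter_le _ _) (by simp)
  · rw [Finset.card_filter, Finset.card_filter, ← Finset.sum_add_distrib]
    exact Finset.sum_le_sum fun i _ => by split_ifs <;> omega

lemma mu_eq_of (w r T : ℕ)
    (hex : ∃ u : Fin (w+1) → ℕ, (∑ j, u j) = r + 2 ∧
      (Finset.univ.filter fun j => 2 ≤ u j).card +
        ((Finset.univ.filter fun j => 1 ≤ u j).card).choose 2 = T)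
    (hub : ∀ u : Fin (w+1) → ℕ, (∑ j, u j) = r + 2 →
      (Finset.univ.filter fun j => 2 ≤ u j).card +
        ((Finset.univ.filter fun j => 1 ≤ u j).card).choose 2 ≤ T) :
    mu w r 2 = T := by
  obtain ⟨u₀, hu₀, hT₀⟩ := hex
  apply IsGreatest.csSup_eq
  constructor
  · exact ⟨u₀, hu₀, ((lbs_ncard w r u₀ hu₀).trans hT₀).symm⟩
  · rintro N ⟨u, hu, rfl⟩
    rw [lbs_ncard w r u hu]
    exact hub u hu


theorem statement10 (w r : ℕ) :
    (2 * w ≤ r → mu w r 2 = Nat.choose (w + 2) 2) ∧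
    (w ≤ r + 1 → r < 2 * w → mu w r 2 = Nat.choose (w + 1) 2 + (r + 1 - w)) ∧
    (r + 1 < w → mu w r 2 = Nat.choose (r + 2) 2) := by
  refine ⟨?_, ?_, ?_⟩
  · -- case r ≥ 2w
    intro h1
    apply mu_eq_of
    · refine ⟨fun j => 2 + if j = 0 then r - 2*w else 0, ?_, ?_⟩
      · rw [Finset.sum_add_distrib, Finset.sum_const, Finset.sum_ite_eq' Finset.univ
          (0 : Fin (w+1)) (fun _ => r - 2*w)]
        simp only [Finset.card_univ, Fintype.card_fin, smul_eq_mul, Finset.mem_univ, if_true]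
        omega
      · have hf2 : (Finset.univ.filter fun j : Fin (w+1) =>
            2 ≤ 2 + if j = 0 then r - 2*w else 0) = Finset.univ :=
          Finset.filter_true_of_mem (fun j _ => Nat.le_add_right 2 _)
        have hf1 : (Finset.univ.filter fun j : Fin (w+1) =>
            1 ≤ 2 + if j = 0 then r - 2*w else 0) = Finset.univ :=
          Finset.filter_true_of_mem
            (fun j _ => le_trans one_le_two (Nat.le_add_right 2 _))
        rw [hf2, hf1, Finset.card_univ, Fintype.card_fin, (choose_step (w+1)).symm]
    · intro u hu
      obtain ⟨hba, ha, hab⟩ := card_facts w u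
      calc (Finset.univ.filter fun j => 2 ≤ u j).card +
            ((Finset.univ.filter fun j => 1 ≤ u j).card).choose 2
          ≤ (w+1) + (w+1).choose 2 :=
            add_le_add (by omega) (Nat.choose_le_choose 2 (by omega))
        _ = (w+2).choose 2 := (choose_step (w+1)).symm
  · -- case w - 1 ≤ r < 2w
    intro hw hr
    apply mu_eq_of
    · refine ⟨fun j => 1 + if (j : ℕ) < r + 1 - w then 1 else 0, ?_, ?_⟩
      · rw [Finset.sum_add_distrib, Finset.sum_const,
          sum_indicator_lt (w+1) (r+1-w) (by omega)]
        simp only [Finset.card_univ, Fintype.card_fin, smul_eq_mul]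
        omega
      · have hf1 : (Finset.univ.filter fun j : Fin (w+1) =>
            1 ≤ 1 + if (j : ℕ) < r + 1 - w then 1 else 0) = Finset.univ :=
          Finset.filter_true_of_mem (fun j _ => Nat.le_add_right 1 _)
        have hf2 : (Finset.univ.filter fun j : Fin (w+1) =>
            2 ≤ 1 + if (j : ℕ) < r + 1 - w then 1 else 0)
            = (Finset.univ.filter fun j : Fin (w+1) => (j : ℕ) < r + 1 - w) := by
          apply Finset.filter_congr
          intro j _
          by_cases h : (j : ℕ) < r + 1 - w <;> simp [h]
        rw [hf1, hf2, Finset.card_univ, Fintype.card_fin,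
          card_filter_lt (w+1) (r+1-w) (by omega)]
        omega
    · intro u hu
      obtain ⟨hba, ha, hab⟩ := card_facts w u
      rw [hu] at hab
      set a := (Finset.univ.filter fun j => 1 ≤ u j).card
      set b := (Finset.univ.filter fun j => 2 ≤ u j).card
      rcases le_or_gt a w with h | h
      · calc b + a.choose 2 ≤ a + a.choose 2 := by omega
          _ = (a+1).choose 2 := (choose_step a).symm
          _ ≤ (w+1).choose 2 := Nat.choose_le_choose 2 (by omega)
          _ ≤ (w+1).choose 2 + (r + 1 - w) := Nat.le_add_right _ _
      · have haw : a = w + 1 := by omega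
        have hb : b ≤ r + 1 - w := by omega
        rw [haw]
        omega
  · -- case r + 1 < w
    intro h3
    apply mu_eq_of
    · refine ⟨fun j => if (j : ℕ) < r + 2 then 1 else 0, ?_, ?_⟩
      · exact sum_indicator_lt (w+1) (r+2) (by omega)
      · have hf2 : (Finset.univ.filter fun j : Fin (w+1) =>
            2 ≤ if (j : ℕ) < r + 2 then 1 else 0) = ∅ := by
          rw [Finset.filter_eq_empty_iff]
          intro j _
          split_ifs <;> omega
        have hf1 : (Finset.univ.filter fun j : Fin (w+1) =>
            1 ≤ if (j : ℕ) < r + 2 then 1 else 0)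
            = (Finset.univ.filter fun j : Fin (w+1) => (j : ℕ) < r + 2) := by
          apply Finset.filter_congr
          intro j _
          by_cases h : (j : ℕ) < r + 2 <;> simp [h]
        rw [hf2, hf1, card_filter_lt (w+1) (r+2) (by omega), Finset.card_empty]
        omega
    · intro u hu
      obtain ⟨hba, ha, hab⟩ := card_facts w u
      rw [hu] at hab
      set a := (Finset.univ.filter fun j => 1 ≤ u j).card
      set b := (Finset.univ.filter fun j => 2 ≤ u j).card
      rcases Nat.eq_zero_or_pos b with hb | hb
      · rw [hb]
        simpa using Nat.choose_le_choose 2 (show a ≤ r + 2 by omega)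
      · calc b + a.choose 2 ≤ a + a.choose 2 := by omega
          _ = (a+1).choose 2 := (choose_step a).symm
          _ ≤ (r+2).choose 2 := Nat.choose_le_choose 2 (by omega)


end TandemDup
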